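/- In a coaugmented k-coalgebra C, the δ-filtration is a coalgebra filtration: Δ(D_n) ⊆ Σ_{r+s=n} D_r ⊗ D_s for all n ∈ ℕ. Consequently C′ := ⋃_{n∈ℕ} D_n is a subcoalgebra of C containing 1̲. (Lemma 2.8(b),(d)) -/

import Mathlib

open TensorProduct PiTensorProduct

noncomputable section

namespace CDP

variable (k : Type) [Field k] (C : Type) [AddCommGroup C] [Module k C]

/-- The canonical equivalence `⨂[k]^1 C ≃ C`. -/
def tpowOne : (⨂[k]^1 C) ≃ₗ[k] C := PiTensorProduct.subsingletonEquiv (0 : Fin 1)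

/-- Splitting a tensor power. -/
def tpowSplit (a b : ℕ) : (⨂[k]^(a+b) C) ≃ₗ[k] (⨂[k]^a C) ⊗[k] (⨂[k]^b C) :=
  (PiTensorProduct.reindex k (fun _ : Fin (a+b) => C) finSumFinEquiv.symm).trans
    (PiTensorProduct.tmulEquiv k C).symm

/-- Prepending a tensor factor. -/
def consTP (n : ℕ) : C ⊗[k] (⨂[k]^n C) →ₗ[k] ⨂[k]^(n+1) C :=
  (PiTensorProduct.reindex k (fun _ : Fin (1+n) => C)
      (finCongr (Nat.add_comm 1 n))).toLinearMap ∘ₗ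
    (tpowSplit k C 1 n).symm.toLinearMap ∘ₗ
    (TensorProduct.map (tpowOne k C).symm.toLinearMap LinearMap.id)

variable {C} in
/-- The iterated comultiplication `Δ^n : C → C^{⊗ n}`, with `Δ^0 := ε`. -/
def DeltaIter (comul : C →ₗ[k] C ⊗[k] C) (counit : C →ₗ[k] k) :
    (n : ℕ) → (C →ₗ[k] ⨂[k]^n C)
  | 0 => (PiTensorProduct.isEmptyEquiv (Fin 0)).symm.toLinearMap ∘ₗ counit
  | n+1 => consTP k C n ∘ₗ
      (TensorProduct.map LinearMap.id (DeltaIter comul counit n)) ∘ₗ comul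

variable {C} in
/-- The projection `id - u ∘ ε` associated to the coaugmentation `one = u(1)`. -/
def proj (counit : C →ₗ[k] k) (one : C) : C →ₗ[k] C :=
  LinearMap.id - (LinearMap.toSpanSingleton k C one) ∘ₗ counit

variable {C} in
/-- Drinfeld's maps `δ_n := (id - u∘ε)^{⊗n} ∘ Δ^n`. -/
def deltaN (comul : C →ₗ[k] C ⊗[k] C) (counit : C →ₗ[k] k) (one : C) (n : ℕ) :
    C →ₗ[k] ⨂[k]^n C :=
  (PiTensorProduct.map fun _ : Fin n => proj k counit one) ∘ₗ DeltaIter k comul counit n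

variable {C} in
/-- The `δ`-filtration `D_n := ker δ_{n+1}`. -/
def Dfil (comul : C →ₗ[k] C ⊗[k] C) (counit : C →ₗ[k] k) (one : C) (n : ℕ) :
    Submodule k C :=
  LinearMap.ker (deltaN k comul counit one (n+1))

/-- For subspaces `X, Y ⊆ C`, the subspace `X ⊗ Y ⊆ C ⊗ C`. -/
def tsub (X Y : Submodule k C) : Submodule k (C ⊗[k] C) :=
  LinearMap.range (TensorProduct.map X.subtype Y.subtype)

end CDP

open CDP

section LinAlg

variable {k : Type} [Field k] {C M N : Type} [AddCommGroup C] [Module k C]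
  [AddCommGroup M] [Module k M] [AddCommGroup N] [Module k N]

lemma TP.map_sub_left (f₁ f₂ : C →ₗ[k] M) (g : C →ₗ[k] N) :
    TensorProduct.map (f₁ - f₂) g = TensorProduct.map f₁ g - TensorProduct.map f₂ g := by
  apply TensorProduct.ext'
  intro x y
  simp [TensorProduct.sub_tmul]

lemma TP.map_sub_right (f : C →ₗ[k] M) (g₁ g₂ : C →ₗ[k] N) :
    TensorProduct.map f (g₁ - g₂) = TensorProduct.map f g₁ - TensorProduct.map f g₂ := by
  apply TensorProduct.ext'
  intro x y
  simp [TensorProduct.tmul_sub]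

/-- existence of a linear projection onto a subspace -/
lemma exists_projection (A : Submodule k C) :
    ∃ p : C →ₗ[k] C, (∀ x ∈ A, p x = x) ∧ (∀ x, p x ∈ A) := by
  obtain ⟨B, hB⟩ := A.exists_isCompl
  refine ⟨A.subtype ∘ₗ A.linearProjOfIsCompl B hB, ?_, fun x => (A.linearProjOfIsCompl B hB x).2⟩
  intro x hx
  exact congrArg Subtype.val (Submodule.projectionOnto_apply_of_mem_left hB hx)

lemma tmul_mem_tsub {A B : Submodule k C} {x y : C} (hx : x ∈ A) (hy : y ∈ B) :
    x ⊗ₜ[k] y ∈ tsub k C A B :=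
  ⟨(⟨x, hx⟩ : A) ⊗ₜ[k] (⟨y, hy⟩ : B), rfl⟩

lemma tsub_mono {A A' B B' : Submodule k C} (hA : A ≤ A') (hB : B ≤ B') :
    tsub k C A B ≤ tsub k C A' B' :=
  TensorProduct.range_mapIncl_mono hA hB

lemma map_tsub_mem {A B A' B' : Submodule k C} {f g : C →ₗ[k] C}
    (hf : ∀ x ∈ A, f x ∈ A') (hg : ∀ x ∈ B, g x ∈ B') {y : C ⊗[k] C}
    (hy : y ∈ tsub k C A B) :
    TensorProduct.map f g y ∈ tsub k C A' B' := by
  obtain ⟨z, rfl⟩ := hy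
  refine ⟨TensorProduct.map ((f ∘ₗ A.subtype).codRestrict A' (fun a => hf a a.2))
    ((g ∘ₗ B.subtype).codRestrict B' (fun b => hg b b.2)) z, ?_⟩
  rw [← LinearMap.comp_apply, ← TensorProduct.map_comp, ← LinearMap.comp_apply,
    ← TensorProduct.map_comp]
  exact congrArg (fun φ => φ z) (congrArg₂ (TensorProduct.map :
    (A →ₗ[k] C) → (B →ₗ[k] C) → (A ⊗[k] B →ₗ[k] C ⊗[k] C)) (LinearMap.ext fun a => rfl)
    (LinearMap.ext fun b => rfl))

lemma map_id_on_tsub {A B : Submodule k C} {f g : C →ₗ[k] C}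
    (hf : ∀ x ∈ A, f x = x) (hg : ∀ x ∈ B, g x = x) {y : C ⊗[k] C}
    (hy : y ∈ tsub k C A B) :
    TensorProduct.map f g y = y := by
  obtain ⟨z, rfl⟩ := hy
  rw [← LinearMap.comp_apply, ← TensorProduct.map_comp]
  have h1 : f ∘ₗ A.subtype = A.subtype := by ext a; exact hf a a.2
  have h2 : g ∘ₗ B.subtype = B.subtype := by ext b; exact hg b b.2
  rw [h1, h2]

lemma tsub_inf {A B : Submodule k C} {y : C ⊗[k] C}
    (h1 : y ∈ tsub k C A ⊤) (h2 : y ∈ tsub k C ⊤ B) : y ∈ tsub k C A B := by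
  obtain ⟨pA, hpA1, hpA2⟩ := exists_projection A
  obtain ⟨pB, hpB1, hpB2⟩ := exists_projection B
  have e1 : TensorProduct.map pA LinearMap.id y = y :=
    map_id_on_tsub hpA1 (fun x _ => rfl) h1
  have e2 : TensorProduct.map LinearMap.id pB y = y :=
    map_id_on_tsub (fun x _ => rfl) hpB1 h2
  have e3 : TensorProduct.map pA pB y = y := by
    have : TensorProduct.map pA pB =
        TensorProduct.map pA LinearMap.id ∘ₗ TensorProduct.map LinearMap.id pB := by
      rw [← TensorProduct.map_comp]; simp
    rw [this, LinearMap.comp_apply, e2, e1]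
  rw [← e3]
  exact map_tsub_mem (fun x _ => hpA2 x) (fun x _ => hpB2 x) h2

lemma tsub_bot_left (B : Submodule k C) : tsub k C ⊥ B = ⊥ := by
  rw [tsub, eq_bot_iff]
  rintro _ ⟨z, rfl⟩
  have : (⊥ : Submodule k C).subtype = 0 := by
    ext x; exact (Submodule.mem_bot k).1 x.2
  rw [this, TensorProduct.map_zero_left]
  simp

lemma tsub_bot_right (A : Submodule k C) : tsub k C A ⊥ = ⊥ := by
  rw [tsub, eq_bot_iff]
  rintro _ ⟨z, rfl⟩
  have : (⊥ : Submodule k C).subtype = 0 := by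
    ext x; exact (Submodule.mem_bot k).1 x.2
  rw [this, TensorProduct.map_zero_right]
  simp

/-- The kernel lemma: over a field, an element killed by `f ⊗ g` lies in
`ker f ⊗ C + C ⊗ ker g`. -/
lemma ker_map_le (f : C →ₗ[k] M) (g : C →ₗ[k] N) {y : C ⊗[k] C}
    (h : TensorProduct.map f g y = 0) :
    y ∈ tsub k C (LinearMap.ker f) ⊤ ⊔ tsub k C ⊤ (LinearMap.ker g) := by
  obtain ⟨Sf, hSf⟩ := (LinearMap.ker f).exists_isCompl
  obtain ⟨Sg, hSg⟩ := (LinearMap.ker g).exists_isCompl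
  set rf : C →ₗ[k] C := Sf.subtype ∘ₗ Sf.linearProjOfIsCompl (LinearMap.ker f) hSf.symm with hrf
  set rg : C →ₗ[k] C := Sg.subtype ∘ₗ Sg.linearProjOfIsCompl (LinearMap.ker g) hSg.symm with hrg
  set ef : C →ₗ[k] C :=
    (LinearMap.ker f).subtype ∘ₗ (LinearMap.ker f).linearProjOfIsCompl Sf hSf with hef
  set eg : C →ₗ[k] C :=
    (LinearMap.ker g).subtype ∘ₗ (LinearMap.ker g).linearProjOfIsCompl Sg hSg with heg
  have hsplitf : ef + rf = LinearMap.id := by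
    ext x
    exact Submodule.projection_add_projection_eq_self hSf x
  have hsplitg : eg + rg = LinearMap.id := by
    ext x
    exact Submodule.projection_add_projection_eq_self hSg x
  have hdecomp : y = TensorProduct.map ef LinearMap.id y + TensorProduct.map rf eg y
      + TensorProduct.map rf rg y := by
    have h1 : TensorProduct.map rf eg y + TensorProduct.map rf rg y
        = TensorProduct.map rf LinearMap.id y := by
      rw [← LinearMap.add_apply, ← TensorProduct.map_add_right, hsplitg]
    have h2 : TensorProduct.map ef LinearMap.id y + TensorProduct.map rf LinearMap.id y = y := by
      rw [← LinearMap.add_apply, ← TensorProduct.map_add_left, hsplitf]; simp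
    rw [add_assoc, h1, h2]
  have hfrf : f ∘ₗ ef = 0 := by
    ext x; exact ((LinearMap.ker f).linearProjOfIsCompl Sf hSf x).2
  have hgeg : g ∘ₗ eg = 0 := by
    ext x; exact ((LinearMap.ker g).linearProjOfIsCompl Sg hSg x).2
  have t1 : TensorProduct.map f g (TensorProduct.map ef LinearMap.id y) = 0 := by
    rw [← LinearMap.comp_apply, ← TensorProduct.map_comp, hfrf, TensorProduct.map_zero_left]
    simp
  have t2 : TensorProduct.map f g (TensorProduct.map rf eg y) = 0 := by
    rw [← LinearMap.comp_apply, ← TensorProduct.map_comp, hgeg, TensorProduct.map_zero_right]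
    simp
  have h3 : TensorProduct.map rf rg y = 0 := by
    set z : Sf ⊗[k] Sg := TensorProduct.map
      (Sf.linearProjOfIsCompl (LinearMap.ker f) hSf.symm)
      (Sg.linearProjOfIsCompl (LinearMap.ker g) hSg.symm) y with hz
    have hzy : TensorProduct.map rf rg y = TensorProduct.map Sf.subtype Sg.subtype z := by
      rw [hz, ← LinearMap.comp_apply, ← TensorProduct.map_comp]
    have hinjf : Function.Injective (f ∘ₗ Sf.subtype) := by
      rw [← LinearMap.ker_eq_bot, eq_bot_iff]
      rintro x hx
      have hm : (x : C) ∈ LinearMap.ker f ⊓ Sf := ⟨hx, x.2⟩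
      rw [hSf.inf_eq_bot] at hm
      have hx0 : (x : C) = 0 := (Submodule.mem_bot k).1 hm
      simpa [Submodule.mem_bot] using Subtype.ext hx0
    have hinjg : Function.Injective (g ∘ₗ Sg.subtype) := by
      rw [← LinearMap.ker_eq_bot, eq_bot_iff]
      rintro x hx
      have hm : (x : C) ∈ LinearMap.ker g ⊓ Sg := ⟨hx, x.2⟩
      rw [hSg.inf_eq_bot] at hm
      have hx0 : (x : C) = 0 := (Submodule.mem_bot k).1 hm
      simpa [Submodule.mem_bot] using Subtype.ext hx0
    have hinj : Function.Injective (TensorProduct.map (f ∘ₗ Sf.subtype) (g ∘ₗ Sg.subtype)) := by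
      rw [← LinearMap.lTensor_comp_rTensor, LinearMap.coe_comp]
      exact (Module.Flat.lTensor_preserves_injective_linearMap _ hinjg).comp
        (Module.Flat.rTensor_preserves_injective_linearMap _ hinjf)
    have hz0 : TensorProduct.map (f ∘ₗ Sf.subtype) (g ∘ₗ Sg.subtype) z = 0 := by
      have e : TensorProduct.map (f ∘ₗ Sf.subtype) (g ∘ₗ Sg.subtype) z
          = TensorProduct.map f g (TensorProduct.map rf rg y) := by
        rw [hz, ← LinearMap.comp_apply, ← TensorProduct.map_comp,
          ← LinearMap.comp_apply, ← TensorProduct.map_comp]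
        rfl
      have e4 := congrArg (TensorProduct.map f g) hdecomp
      rw [map_add, map_add, t1, t2, h, zero_add, zero_add] at e4
      rw [e, ← e4]
    have : z = 0 := hinj (by rw [hz0, map_zero])
    rw [hzy, this, map_zero]
  -- assemble
  rw [hdecomp, h3, add_zero]
  refine Submodule.add_mem_sup ?_ ?_
  · exact map_tsub_mem (fun x _ => ((LinearMap.ker f).linearProjOfIsCompl Sf hSf x).2)
      (fun x _ => Submodule.mem_top) ⟨TensorProduct.map (LinearMap.id.codRestrict ⊤ (fun _ => Submodule.mem_top)) (LinearMap.id.codRestrict ⊤ (fun _ => Submodule.mem_top)) y, by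
        rw [← LinearMap.comp_apply, ← TensorProduct.map_comp]
        simp [LinearMap.subtype_comp_codRestrict]⟩
  · exact map_tsub_mem (fun x _ => Submodule.mem_top)
      (fun x _ => ((LinearMap.ker g).linearProjOfIsCompl Sg hSg x).2) ⟨TensorProduct.map (LinearMap.id.codRestrict ⊤ (fun _ => Submodule.mem_top)) (LinearMap.id.codRestrict ⊤ (fun _ => Submodule.mem_top)) y, by
        rw [← LinearMap.comp_apply, ← TensorProduct.map_comp]
        simp [LinearMap.subtype_comp_codRestrict]⟩

end LinAlg

section Chain

variable {k : Type} [Field k] {C : Type} [AddCommGroup C] [Module k C]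

/-- The chain lemma: decomposing an element along nested filtrations. -/
lemma chain_lemma {m : ℕ} (F G : ℕ → Submodule k C) (hG : Monotone G) (hG0 : G 0 = ⊥)
    {y : C ⊗[k] C} (htop : y ∈ tsub k C ⊤ (G m))
    (hcond : ∀ s, 1 ≤ s → s ≤ m → y ∈ tsub k C (F s) ⊤ ⊔ tsub k C ⊤ (G (m - s))) :
    y ∈ ⨆ s ∈ Finset.Icc 1 m, tsub k C (F s) (G (m + 1 - s)) := by
  have hproj : ∀ j : ℕ, ∃ p : C →ₗ[k] C, (∀ x ∈ G j, p x = x) ∧ (∀ x, p x ∈ G j) :=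
    fun j => exists_projection (G j)
  choose p hp1 hp2 using hproj
  have hp0 : p 0 = 0 := by
    ext x
    have := hp2 0 x
    rw [hG0, Submodule.mem_bot] at this
    simpa using this
  have hy : y = ∑ i ∈ Finset.range m,
      TensorProduct.map LinearMap.id (p (i+1) - p i) y := by
    have hsum : ∀ i, TensorProduct.map LinearMap.id (p (i+1) - p i) y
        = TensorProduct.map LinearMap.id (p (i+1)) y
          - TensorProduct.map LinearMap.id (p i) y := by
      intro i
      rw [TP.map_sub_right, LinearMap.sub_apply]
    rw [Finset.sum_congr rfl (fun i _ => hsum i),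
      Finset.sum_range_sub (fun i => TensorProduct.map LinearMap.id (p i) y)]
    rw [hp0, TensorProduct.map_zero_right, map_id_on_tsub (fun x _ => rfl) (hp1 m) htop]
    simp
  rw [hy]
  refine Submodule.sum_mem _ (fun i hi => ?_)
  rw [Finset.mem_range] at hi
  have hs1 : 1 ≤ m - i := by omega
  have hs2 : m - i ≤ m := by omega
  obtain ⟨u, hu, v, hv, huv⟩ := Submodule.mem_sup.1 (hcond (m - i) hs1 hs2)
  have hGi : m - (m - i) = i := by omega
  rw [hGi] at hv
  have hv0 : TensorProduct.map LinearMap.id (p (i+1) - p i) v = 0 := by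
    obtain ⟨w, rfl⟩ := hv
    rw [← LinearMap.comp_apply, ← TensorProduct.map_comp]
    have hd : (p (i+1) - p i) ∘ₗ (G i).subtype = 0 := by
      ext x
      have h1 : p (i+1) (x : C) = x := hp1 (i+1) x (hG (by omega : i ≤ i + 1) x.2)
      have h2 : p i (x : C) = x := hp1 i x x.2
      simp [h1, h2]
    rw [hd, TensorProduct.map_zero_right]
    simp
  have hterm : TensorProduct.map LinearMap.id (p (i+1) - p i) y
      ∈ tsub k C (F (m - i)) (G (i+1)) := by
    rw [← huv, map_add, hv0, add_zero]
    refine tsub_inf ?_ ?_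
    · exact map_tsub_mem (fun x hx => hx) (fun x _ => Submodule.mem_top) hu
    · refine map_tsub_mem (fun x _ => Submodule.mem_top) (fun x _ => ?_) hu
      simp only [LinearMap.sub_apply]
      exact Submodule.sub_mem _ (hp2 (i+1) x) (hG (by omega : i ≤ i + 1) (hp2 i x))
  have hidx : G (i + 1) = G (m + 1 - (m - i)) := by
    congr 1; omega
  rw [hidx] at hterm
  have hle : tsub k C (F (m - i)) (G (m + 1 - (m - i)))
      ≤ ⨆ s ∈ Finset.Icc 1 m, tsub k C (F s) (G (m + 1 - s)) := by
    refine le_trans ?_ (le_iSup _ (m - i))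
    exact le_trans (le_of_eq rfl) (le_iSup (fun _ : m - i ∈ Finset.Icc 1 m =>
      tsub k C (F (m - i)) (G (m + 1 - (m - i)))) (Finset.mem_Icc.2 ⟨hs1, hs2⟩))
  exact hle hterm

end Chain

section Cons

variable (k : Type) [Field k] (C : Type) [AddCommGroup C] [Module k C]

lemma consTP_tmul (n : ℕ) (x : C) (f : Fin n → C) :
    consTP k C n (x ⊗ₜ[k] PiTensorProduct.tprod k f) = PiTensorProduct.tprod k (Fin.cons x f) := by
  simp only [consTP, tpowSplit, tpowOne, LinearMap.coe_comp, LinearEquiv.coe_coe,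
    Function.comp_apply, TensorProduct.map_tmul, LinearMap.id_apply,
    PiTensorProduct.subsingletonEquiv_symm_apply, LinearEquiv.trans_symm,
    LinearEquiv.trans_apply, PiTensorProduct.reindex_symm,
    PiTensorProduct.tmulEquiv_apply, PiTensorProduct.reindex_tprod,
    LinearEquiv.symm_symm, Equiv.symm_symm]
  have hfun : (fun i : Fin (n+1) => Sum.elim (fun _ : Fin 1 => x) f
      (finSumFinEquiv.symm ((finCongr (Nat.add_comm 1 n)).symm i))) = Fin.cons x f := by
    funext i
    rcases i with ⟨iv, hiv⟩
    rcases Nat.eq_zero_or_pos iv with h0 | h0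
    · subst h0
      have : finSumFinEquiv.symm ((finCongr (Nat.add_comm 1 n)).symm (⟨0, hiv⟩ : Fin (n+1)))
          = Sum.inl ⟨0, Nat.one_pos⟩ := by
        rw [Equiv.symm_apply_eq]
        rfl
      rw [this]
      rfl
    · have : finSumFinEquiv.symm ((finCongr (Nat.add_comm 1 n)).symm (⟨iv, hiv⟩ : Fin (n+1)))
          = Sum.inr ⟨iv - 1, by omega⟩ := by
        rw [Equiv.symm_apply_eq]
        simp only [finCongr_symm, finCongr_apply, finSumFinEquiv_apply_right]
        ext
        simp
        omega
      rw [this]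
      simp only [Sum.elim_inr]
      have : (⟨iv, hiv⟩ : Fin (n+1)) = Fin.succ ⟨iv - 1, by omega⟩ := by
        ext; simp; omega
      rw [this, Fin.cons_succ]
  rw [← hfun]
  congr 1
  funext i
  congr 1
  funext j
  rw [Subsingleton.elim j 0]
  simp

end Cons

section Cons2

variable (k : Type) [Field k] (C : Type) [AddCommGroup C] [Module k C]

lemma map_consTP (n : ℕ) (g : C →ₗ[k] C) :
    (PiTensorProduct.map fun _ : Fin (n+1) => g) ∘ₗ consTP k C n
      = consTP k C n ∘ₗ TensorProduct.map g (PiTensorProduct.map fun _ : Fin n => g) := by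
  apply TensorProduct.ext'
  intro x t
  induction t using PiTensorProduct.induction_on with
  | smul_tprod r f =>
    rw [TensorProduct.tmul_smul, map_smul, map_smul]
    congr 1
    simp only [LinearMap.comp_apply, TensorProduct.map_tmul, consTP_tmul,
      PiTensorProduct.map_tprod, consTP_tmul]
    congr 1
    funext i
    refine Fin.cases ?_ (fun j => ?_) i <;> simp
  | add u v hu hv =>
    rw [TensorProduct.tmul_add, map_add, map_add, hu, hv]

/-- `consTP` as a linear equivalence. -/
def consE (n : ℕ) : (C ⊗[k] (⨂[k]^n C)) ≃ₗ[k] (⨂[k]^(n+1) C) :=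
  (TensorProduct.congr (tpowOne k C).symm (LinearEquiv.refl k _)).trans
    ((tpowSplit k C 1 n).symm.trans
      (PiTensorProduct.reindex k (fun _ : Fin (1+n) => C) (finCongr (Nat.add_comm 1 n))))

lemma consE_coe (n : ℕ) : (consE k C n).toLinearMap = consTP k C n := by
  ext z
  rfl

lemma consE_symm_cancel (n : ℕ) {M : Type} [AddCommGroup M] [Module k M]
    (X : M →ₗ[k] C ⊗[k] (⨂[k]^n C)) :
    (consE k C n).symm.toLinearMap ∘ₗ (consTP k C n ∘ₗ X) = X := by
  rw [← consE_coe]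
  ext z
  simp

end Cons2

section Delta

variable {k : Type} [Field k] {C : Type} [AddCommGroup C] [Module k C]

/-- recursion for `deltaN` (no coalgebra axioms needed). -/
lemma deltaN_succ (cm : C →ₗ[k] C ⊗[k] C) (cu : C →ₗ[k] k) (one : C) (n : ℕ) :
    deltaN k cm cu one (n+1)
      = consTP k C n ∘ₗ TensorProduct.map (proj k cu one) (deltaN k cm cu one n) ∘ₗ cm := by
  apply LinearMap.ext
  intro x
  have h := LinearMap.congr_fun (map_consTP k C n (proj k cu one))
    ((TensorProduct.map LinearMap.id (DeltaIter k cm cu n)) (cm x))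
  simp only [LinearMap.comp_apply] at h ⊢
  show (PiTensorProduct.map _) (consTP k C n
    ((TensorProduct.map LinearMap.id (DeltaIter k cm cu n)) (cm x))) = _
  rw [h, ← LinearMap.comp_apply (TensorProduct.map _ _), ← TensorProduct.map_comp,
    LinearMap.comp_id]
  rfl

variable [Coalgebra k C]

lemma deltaN_one (one : C) :
    deltaN k (Coalgebra.comul : C →ₗ[k] C ⊗[k] C) Coalgebra.counit one 1
      = (tpowOne k C).symm.toLinearMap ∘ₗ proj k Coalgebra.counit one := by
  ext x
  show (PiTensorProduct.map fun _ : Fin 1 => proj k Coalgebra.counit one)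
      (consTP k C 0 ((TensorProduct.map LinearMap.id (DeltaIter k _ Coalgebra.counit 0))
        (Coalgebra.comul x))) = _
  have h1 : (TensorProduct.map LinearMap.id (DeltaIter k Coalgebra.comul Coalgebra.counit 0))
      (Coalgebra.comul x)
      = x ⊗ₜ[k] (PiTensorProduct.tprod k (fun i : Fin 0 => i.elim0)) := by
    show (TensorProduct.map LinearMap.id
        ((PiTensorProduct.isEmptyEquiv (Fin 0)).symm.toLinearMap ∘ₗ Coalgebra.counit))
        (Coalgebra.comul x) = _
    have he : TensorProduct.map (LinearMap.id : C →ₗ[k] C)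
        (((PiTensorProduct.isEmptyEquiv (Fin 0) : (⨂[k]^0 C) ≃ₗ[k] k)).symm.toLinearMap
          ∘ₗ (Coalgebra.counit : C →ₗ[k] k))
        = TensorProduct.map LinearMap.id
            ((PiTensorProduct.isEmptyEquiv (Fin 0) : (⨂[k]^0 C) ≃ₗ[k] k)).symm.toLinearMap
          ∘ₗ LinearMap.lTensor C Coalgebra.counit := by
      rw [LinearMap.lTensor, ← TensorProduct.map_comp, LinearMap.comp_id]
    rw [he, LinearMap.comp_apply, Coalgebra.lTensor_counit_comul]
    have h2 : ((PiTensorProduct.isEmptyEquiv (Fin 0) : (⨂[k]^0 C) ≃ₗ[k] k).symm (1 : k))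
        = PiTensorProduct.tprod k (fun i : Fin 0 => i.elim0) := by
      rw [PiTensorProduct.isEmptyEquiv_symm_apply, one_smul]
      congr 1
    simp [h2]
  rw [h1, consTP_tmul, PiTensorProduct.map_tprod]
  simp only [LinearMap.comp_apply, tpowOne, LinearEquiv.coe_coe,
    PiTensorProduct.subsingletonEquiv_symm_apply]
  congr 1
  funext i
  have : i = 0 := Subsingleton.elim i 0
  subst this
  simp

end Delta



section Facts

variable {k : Type} [Field k] {C : Type} [AddCommGroup C] [Module k C] [Coalgebra k C]
variable {one : C}

lemma pN_apply (x : C) :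
    proj k (Coalgebra.counit : C →ₗ[k] k) one x = x - (Coalgebra.counit : C →ₗ[k] k) x • one := by
  simp [proj, LinearMap.toSpanSingleton_apply]

variable (hcm : Coalgebra.comul one = one ⊗ₜ[k] one)
  (hcu : Coalgebra.counit one = (1 : k))

include hcu in
lemma pi_one : proj k (Coalgebra.counit : C →ₗ[k] k) one one = 0 := by
  rw [pN_apply, hcu, one_smul, sub_self]

include hcm hcu in
lemma delta_one_succ (n : ℕ) :
    deltaN k (Coalgebra.comul : C →ₗ[k] C ⊗[k] C) Coalgebra.counit one (n+1) one = 0 := by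
  rw [deltaN_succ, LinearMap.comp_apply, LinearMap.comp_apply, hcm,
    TensorProduct.map_tmul, pi_one hcu, TensorProduct.zero_tmul, map_zero]

include hcm hcu in
lemma delta_comp_proj (n : ℕ) :
    deltaN k (Coalgebra.comul : C →ₗ[k] C ⊗[k] C) Coalgebra.counit one (n+1)
        ∘ₗ proj k (Coalgebra.counit : C →ₗ[k] k) one
      = deltaN k (Coalgebra.comul : C →ₗ[k] C ⊗[k] C) Coalgebra.counit one (n+1) := by
  ext x
  rw [LinearMap.comp_apply, pN_apply, map_sub, map_smul, delta_one_succ hcm hcu,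
    smul_zero, sub_zero]

lemma dN_one_eq_zero_iff (x : C) :
    deltaN k (Coalgebra.comul : C →ₗ[k] C ⊗[k] C) Coalgebra.counit one 1 x = 0
      ↔ proj k (Coalgebra.counit : C →ₗ[k] k) one x = 0 := by
  rw [deltaN_one, LinearMap.comp_apply]
  exact LinearEquiv.map_eq_zero_iff _

include hcm hcu in
lemma comul_pi_pi_proj :
    (TensorProduct.map (proj k (Coalgebra.counit : C →ₗ[k] k) one)
        (proj k (Coalgebra.counit : C →ₗ[k] k) one)) ∘ₗ
        (Coalgebra.comul : C →ₗ[k] C ⊗[k] C) ∘ₗ proj k (Coalgebra.counit : C →ₗ[k] k) one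
      = (TensorProduct.map (proj k (Coalgebra.counit : C →ₗ[k] k) one)
        (proj k (Coalgebra.counit : C →ₗ[k] k) one)) ∘ₗ Coalgebra.comul := by
  ext x
  simp only [LinearMap.comp_apply]
  rw [pN_apply, map_sub, map_smul, hcm, map_sub, map_smul, TensorProduct.map_tmul,
    pi_one hcu, TensorProduct.zero_tmul, smul_zero, sub_zero]

include hcm hcu in
/-- `δ_{m+1}` factors through `δ_m` (for `m ≥ 1`). -/
lemma fact_II : ∀ m, 1 ≤ m →
    ∃ T : (⨂[k]^m C) →ₗ[k] (⨂[k]^(m+1) C),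
      deltaN k (Coalgebra.comul : C →ₗ[k] C ⊗[k] C) Coalgebra.counit one (m+1)
        = T ∘ₗ deltaN k (Coalgebra.comul : C →ₗ[k] C ⊗[k] C) Coalgebra.counit one m := by
  intro m hm
  induction m, hm using Nat.le_induction with
  | base =>
    refine ⟨consTP k C 1 ∘ₗ TensorProduct.map (proj k (Coalgebra.counit : C →ₗ[k] k) one)
      (deltaN k (Coalgebra.comul : C →ₗ[k] C ⊗[k] C) Coalgebra.counit one 1) ∘ₗ
      (Coalgebra.comul : C →ₗ[k] C ⊗[k] C) ∘ₗ (tpowOne k C).toLinearMap, ?_⟩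
    have h1 : (tpowOne k C).toLinearMap
        ∘ₗ deltaN k (Coalgebra.comul : C →ₗ[k] C ⊗[k] C) Coalgebra.counit one 1
        = proj k (Coalgebra.counit : C →ₗ[k] k) one := by
      rw [deltaN_one]
      ext x
      simp
    have h2 : TensorProduct.map (proj k (Coalgebra.counit : C →ₗ[k] k) one)
        (deltaN k (Coalgebra.comul : C →ₗ[k] C ⊗[k] C) Coalgebra.counit one 1)
        = TensorProduct.map LinearMap.id ((tpowOne k C).symm.toLinearMap)
          ∘ₗ TensorProduct.map (proj k (Coalgebra.counit : C →ₗ[k] k) one)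
            (proj k (Coalgebra.counit : C →ₗ[k] k) one) := by
      rw [← TensorProduct.map_comp, LinearMap.id_comp, deltaN_one]
    rw [deltaN_succ]
    simp only [LinearMap.comp_assoc]
    rw [h1, h2]
    simp only [LinearMap.comp_assoc]
    rw [comul_pi_pi_proj hcm hcu]
  | succ m hm ih =>
    obtain ⟨T, hT⟩ := ih
    refine ⟨consTP k C (m+1) ∘ₗ TensorProduct.map LinearMap.id T
      ∘ₗ (consE k C m).symm.toLinearMap, ?_⟩
    have h2 : TensorProduct.map (proj k (Coalgebra.counit : C →ₗ[k] k) one)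
        (deltaN k (Coalgebra.comul : C →ₗ[k] C ⊗[k] C) Coalgebra.counit one m)
        ∘ₗ (Coalgebra.comul : C →ₗ[k] C ⊗[k] C)
        = (consE k C m).symm.toLinearMap
          ∘ₗ deltaN k (Coalgebra.comul : C →ₗ[k] C ⊗[k] C) Coalgebra.counit one (m+1) := by
      rw [deltaN_succ]
      exact (consE_symm_cancel k C m _).symm
    have h1 : TensorProduct.map (proj k (Coalgebra.counit : C →ₗ[k] k) one)
        (deltaN k (Coalgebra.comul : C →ₗ[k] C ⊗[k] C) Coalgebra.counit one (m+1))
        = TensorProduct.map LinearMap.id T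
          ∘ₗ TensorProduct.map (proj k (Coalgebra.counit : C →ₗ[k] k) one)
            (deltaN k (Coalgebra.comul : C →ₗ[k] C ⊗[k] C) Coalgebra.counit one m) := by
      rw [← TensorProduct.map_comp, LinearMap.id_comp, hT]
    rw [deltaN_succ _ _ one (m+1), h1]
    simp only [LinearMap.comp_assoc]
    rw [h2]

end Facts

section FactI

variable {k : Type} [Field k] {C : Type} [AddCommGroup C] [Module k C] [Coalgebra k C]
variable {one : C}
variable (hcm : Coalgebra.comul one = one ⊗ₜ[k] one)
  (hcu : Coalgebra.counit one = (1 : k))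

include hcm hcu in
/-- `(δ_a ⊗ δ_b) ∘ Δ` factors through `δ_{a+b}`. -/
lemma fact_I : ∀ a, 1 ≤ a → ∀ b, 1 ≤ b → ∀ c, c = a + b →
    ∃ T : (⨂[k]^c C) →ₗ[k] ((⨂[k]^a C) ⊗[k] (⨂[k]^b C)),
      TensorProduct.map (deltaN k (Coalgebra.comul : C →ₗ[k] C ⊗[k] C) Coalgebra.counit one a)
          (deltaN k (Coalgebra.comul : C →ₗ[k] C ⊗[k] C) Coalgebra.counit one b)
          ∘ₗ (Coalgebra.comul : C →ₗ[k] C ⊗[k] C)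
        = T ∘ₗ deltaN k (Coalgebra.comul : C →ₗ[k] C ⊗[k] C) Coalgebra.counit one c := by
  intro a ha
  induction a, ha using Nat.le_induction with
  | base =>
    intro b hb c hc
    obtain rfl : c = b + 1 := by omega
    refine ⟨TensorProduct.map (tpowOne k C).symm.toLinearMap LinearMap.id
      ∘ₗ (consE k C b).symm.toLinearMap, ?_⟩
    have h1 : TensorProduct.map
        (deltaN k (Coalgebra.comul : C →ₗ[k] C ⊗[k] C) Coalgebra.counit one 1)
        (deltaN k (Coalgebra.comul : C →ₗ[k] C ⊗[k] C) Coalgebra.counit one b)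
        = TensorProduct.map (tpowOne k C).symm.toLinearMap LinearMap.id
          ∘ₗ TensorProduct.map (proj k (Coalgebra.counit : C →ₗ[k] k) one)
            (deltaN k (Coalgebra.comul : C →ₗ[k] C ⊗[k] C) Coalgebra.counit one b) := by
      rw [← TensorProduct.map_comp, LinearMap.id_comp, deltaN_one]
    have h2 : TensorProduct.map (proj k (Coalgebra.counit : C →ₗ[k] k) one)
        (deltaN k (Coalgebra.comul : C →ₗ[k] C ⊗[k] C) Coalgebra.counit one b)
        ∘ₗ (Coalgebra.comul : C →ₗ[k] C ⊗[k] C)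
        = (consE k C b).symm.toLinearMap
          ∘ₗ deltaN k (Coalgebra.comul : C →ₗ[k] C ⊗[k] C) Coalgebra.counit one (b+1) := by
      rw [deltaN_succ]
      exact (consE_symm_cancel k C b _).symm
    rw [h1, LinearMap.comp_assoc, h2, LinearMap.comp_assoc]
  | succ a ha ih =>
    intro b hb c hc
    obtain rfl : c = (a + b) + 1 := by omega
    obtain ⟨T, hT⟩ := ih b hb (a + b) rfl
    set δa := deltaN k (Coalgebra.comul : C →ₗ[k] C ⊗[k] C) Coalgebra.counit one a with hδa
    set δb := deltaN k (Coalgebra.comul : C →ₗ[k] C ⊗[k] C) Coalgebra.counit one b with hδb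
    set δab := deltaN k (Coalgebra.comul : C →ₗ[k] C ⊗[k] C) Coalgebra.counit one (a+b) with hδab
    set P := proj k (Coalgebra.counit : C →ₗ[k] k) one with hP
    set Dl := (Coalgebra.comul : C →ₗ[k] C ⊗[k] C) with hDl
    refine ⟨TensorProduct.map (consTP k C a) LinearMap.id
      ∘ₗ (TensorProduct.assoc k C (⨂[k]^a C) (⨂[k]^b C)).symm.toLinearMap
      ∘ₗ TensorProduct.map LinearMap.id T
      ∘ₗ (consE k C (a+b)).symm.toLinearMap, ?_⟩
    have e0 : deltaN k (Coalgebra.comul : C →ₗ[k] C ⊗[k] C) Coalgebra.counit one (a+1)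
        = consTP k C a ∘ₗ TensorProduct.map P δa ∘ₗ Dl := deltaN_succ _ _ _ _
    rw [e0]
    have e1 : TensorProduct.map (consTP k C a ∘ₗ TensorProduct.map P δa ∘ₗ Dl) δb
        = TensorProduct.map (consTP k C a) LinearMap.id
          ∘ₗ TensorProduct.map (TensorProduct.map P δa ∘ₗ Dl) δb := by
      rw [← TensorProduct.map_comp, LinearMap.id_comp]
    rw [e1]
    have e2 : TensorProduct.map (TensorProduct.map P δa ∘ₗ Dl) δb
        = TensorProduct.map (TensorProduct.map P δa) δb ∘ₗ TensorProduct.map Dl LinearMap.id := by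
      rw [← TensorProduct.map_comp, LinearMap.comp_id]
    rw [e2]
    have e3 : TensorProduct.map Dl LinearMap.id ∘ₗ Dl
        = (TensorProduct.assoc k C C C).symm.toLinearMap
          ∘ₗ TensorProduct.map LinearMap.id Dl ∘ₗ Dl := by
      have hrT : Dl.rTensor C = TensorProduct.map Dl LinearMap.id := rfl
      have hlT : Dl.lTensor C = TensorProduct.map LinearMap.id Dl := rfl
      rw [← hrT, ← hlT, ← Coalgebra.coassoc_symm]
    have e4 : TensorProduct.map (TensorProduct.map P δa) δb
        ∘ₗ (TensorProduct.assoc k C C C).symm.toLinearMap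
        = (TensorProduct.assoc k C (⨂[k]^a C) (⨂[k]^b C)).symm.toLinearMap
          ∘ₗ TensorProduct.map P (TensorProduct.map δa δb) :=
      TensorProduct.map_map_comp_assoc_symm_eq P δa δb
    have e5 : TensorProduct.map P (TensorProduct.map δa δb)
        ∘ₗ TensorProduct.map LinearMap.id Dl
        = TensorProduct.map LinearMap.id T ∘ₗ TensorProduct.map P δab := by
      rw [← TensorProduct.map_comp, LinearMap.comp_id, hT,
        ← TensorProduct.map_comp, LinearMap.id_comp]
    have e7 : TensorProduct.map P δab ∘ₗ Dl
        = (consE k C (a+b)).symm.toLinearMap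
          ∘ₗ deltaN k (Coalgebra.comul : C →ₗ[k] C ⊗[k] C) Coalgebra.counit one (a+b+1) := by
      rw [deltaN_succ]
      exact (consE_symm_cancel k C (a+b) _).symm
    calc (TensorProduct.map (consTP k C a) LinearMap.id
          ∘ₗ TensorProduct.map (TensorProduct.map P δa) δb
            ∘ₗ TensorProduct.map Dl LinearMap.id) ∘ₗ Dl
        = TensorProduct.map (consTP k C a) LinearMap.id
          ∘ₗ TensorProduct.map (TensorProduct.map P δa) δb
          ∘ₗ (TensorProduct.map Dl LinearMap.id ∘ₗ Dl) := by
          simp only [LinearMap.comp_assoc]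
      _ = TensorProduct.map (consTP k C a) LinearMap.id
          ∘ₗ (TensorProduct.map (TensorProduct.map P δa) δb
            ∘ₗ (TensorProduct.assoc k C C C).symm.toLinearMap)
          ∘ₗ TensorProduct.map LinearMap.id Dl ∘ₗ Dl := by
          rw [e3]; simp only [LinearMap.comp_assoc]
      _ = TensorProduct.map (consTP k C a) LinearMap.id
          ∘ₗ (TensorProduct.assoc k C (⨂[k]^a C) (⨂[k]^b C)).symm.toLinearMap
          ∘ₗ (TensorProduct.map P (TensorProduct.map δa δb)
            ∘ₗ TensorProduct.map LinearMap.id Dl) ∘ₗ Dl := by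
          rw [e4]; simp only [LinearMap.comp_assoc]
      _ = TensorProduct.map (consTP k C a) LinearMap.id
          ∘ₗ (TensorProduct.assoc k C (⨂[k]^a C) (⨂[k]^b C)).symm.toLinearMap
          ∘ₗ TensorProduct.map LinearMap.id T
          ∘ₗ (TensorProduct.map P δab ∘ₗ Dl) := by
          rw [e5]; simp only [LinearMap.comp_assoc]
      _ = (TensorProduct.map (consTP k C a) LinearMap.id
          ∘ₗ (TensorProduct.assoc k C (⨂[k]^a C) (⨂[k]^b C)).symm.toLinearMap
          ∘ₗ TensorProduct.map LinearMap.id T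
          ∘ₗ (consE k C (a+b)).symm.toLinearMap)
          ∘ₗ deltaN k (Coalgebra.comul : C →ₗ[k] C ⊗[k] C) Coalgebra.counit one (a+b+1) := by
          rw [e7]; simp only [LinearMap.comp_assoc]

end FactI

section Main

variable {k : Type} [Field k] {C : Type} [AddCommGroup C] [Module k C] [Coalgebra k C]
variable {one : C}
variable (hcm : Coalgebra.comul one = one ⊗ₜ[k] one)
  (hcu : Coalgebra.counit one = (1 : k))

include hcu in
lemma pi_idem :
    proj k (Coalgebra.counit : C →ₗ[k] k) one ∘ₗ proj k (Coalgebra.counit : C →ₗ[k] k) one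
      = proj k (Coalgebra.counit : C →ₗ[k] k) one := by
  ext x
  rw [LinearMap.comp_apply, pN_apply, pN_apply (one := one) x, map_sub, map_smul, hcu,
    smul_eq_mul, mul_one, sub_self, zero_smul, sub_zero]

include hcm hcu in
lemma ker_delta_mono {a b : ℕ} (ha : 1 ≤ a) (hab : a ≤ b) :
    LinearMap.ker (deltaN k (Coalgebra.comul : C →ₗ[k] C ⊗[k] C) Coalgebra.counit one a)
      ≤ LinearMap.ker (deltaN k (Coalgebra.comul : C →ₗ[k] C ⊗[k] C) Coalgebra.counit one b) := by
  induction b, hab using Nat.le_induction with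
  | base => exact le_rfl
  | succ b hb ihb =>
    refine le_trans ihb ?_
    obtain ⟨T, hT⟩ := fact_II hcm hcu b (le_trans ha hb)
    intro x hx
    rw [LinearMap.mem_ker] at hx ⊢
    rw [hT, LinearMap.comp_apply, hx, map_zero]

end Main

theorem delta_filtration_is_coalgebra_filtration'
    (k : Type) [Field k] (C : Type) [AddCommGroup C] [Module k C] [Coalgebra k C]
    (one : C) (hcomul : Coalgebra.comul one = one ⊗ₜ[k] one)
    (hcounit : Coalgebra.counit one = (1 : k)) :
    (∀ n : ℕ,
      Submodule.map (Coalgebra.comul : C →ₗ[k] C ⊗[k] C)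
          (Dfil k Coalgebra.comul Coalgebra.counit one n) ≤
        ⨆ r ∈ Finset.range (n+1),
          tsub k C (Dfil k Coalgebra.comul Coalgebra.counit one r)
            (Dfil k Coalgebra.comul Coalgebra.counit one (n - r))) ∧
    one ∈ (⨆ n : ℕ, Dfil k Coalgebra.comul Coalgebra.counit one n) ∧
    Submodule.map (Coalgebra.comul : C →ₗ[k] C ⊗[k] C)
        (⨆ n : ℕ, Dfil k Coalgebra.comul Coalgebra.counit one n) ≤
      tsub k C (⨆ n : ℕ, Dfil k Coalgebra.comul Coalgebra.counit one n)
        (⨆ n : ℕ, Dfil k Coalgebra.comul Coalgebra.counit one n) := by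
  have hone0 : one ∈ Dfil k Coalgebra.comul Coalgebra.counit one 0 :=
    LinearMap.mem_ker.2 (delta_one_succ hcomul hcounit 0)
  have hpπ : ∀ m : ℕ, 1 ≤ m →
      deltaN k (Coalgebra.comul : C →ₗ[k] C ⊗[k] C) Coalgebra.counit one m
        ∘ₗ proj k (Coalgebra.counit : C →ₗ[k] k) one
      = deltaN k (Coalgebra.comul : C →ₗ[k] C ⊗[k] C) Coalgebra.counit one m := by
    intro m hm
    obtain ⟨t, rfl⟩ : ∃ t, m = t + 1 := ⟨m - 1, by omega⟩
    exact delta_comp_proj hcomul hcounit t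
  have part1 : ∀ n : ℕ,
      Submodule.map (Coalgebra.comul : C →ₗ[k] C ⊗[k] C)
          (Dfil k Coalgebra.comul Coalgebra.counit one n) ≤
        ⨆ r ∈ Finset.range (n+1),
          tsub k C (Dfil k Coalgebra.comul Coalgebra.counit one r)
            (Dfil k Coalgebra.comul Coalgebra.counit one (n - r)) := by
    intro n
    rintro _ ⟨x, hx, rfl⟩
    set S := ⨆ r ∈ Finset.range (n+1),
      tsub k C (Dfil k Coalgebra.comul Coalgebra.counit one r)
        (Dfil k Coalgebra.comul Coalgebra.counit one (n - r)) with hS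
    have hSle : ∀ r, r ≤ n →
        tsub k C (Dfil k Coalgebra.comul Coalgebra.counit one r)
          (Dfil k Coalgebra.comul Coalgebra.counit one (n - r)) ≤ S := by
      intro r hr
      refine le_trans ?_ (le_iSup _ r)
      exact le_iSup (fun _ : r ∈ Finset.range (n+1) =>
        tsub k C (Dfil k Coalgebra.comul Coalgebra.counit one r)
          (Dfil k Coalgebra.comul Coalgebra.counit one (n - r)))
        (Finset.mem_range.2 (by omega))
    set P := proj k (Coalgebra.counit : C →ₗ[k] k) one with hP
    set y := TensorProduct.map P P (Coalgebra.comul x) with hy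
    -- the decomposition of comul x
    have h_b : TensorProduct.map (LinearMap.toSpanSingleton k C one ∘ₗ
        (Coalgebra.counit : C →ₗ[k] k)) LinearMap.id (Coalgebra.comul x) = one ⊗ₜ[k] x := by
      have e : TensorProduct.map (LinearMap.toSpanSingleton k C one ∘ₗ
          (Coalgebra.counit : C →ₗ[k] k)) LinearMap.id
          = TensorProduct.map (LinearMap.toSpanSingleton k C one) LinearMap.id ∘ₗ
            (Coalgebra.counit : C →ₗ[k] k).rTensor C := by
        rw [LinearMap.rTensor, ← TensorProduct.map_comp, LinearMap.comp_id]
      rw [e, LinearMap.comp_apply, Coalgebra.rTensor_counit_comul, TensorProduct.map_tmul]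
      simp [LinearMap.toSpanSingleton_apply]
    have h_a : TensorProduct.map LinearMap.id (LinearMap.toSpanSingleton k C one ∘ₗ
        (Coalgebra.counit : C →ₗ[k] k)) (Coalgebra.comul x) = x ⊗ₜ[k] one := by
      have e : TensorProduct.map LinearMap.id (LinearMap.toSpanSingleton k C one ∘ₗ
          (Coalgebra.counit : C →ₗ[k] k))
          = TensorProduct.map LinearMap.id (LinearMap.toSpanSingleton k C one) ∘ₗ
            (Coalgebra.counit : C →ₗ[k] k).lTensor C := by
        rw [LinearMap.lTensor, ← TensorProduct.map_comp, LinearMap.comp_id]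
      rw [e, LinearMap.comp_apply, Coalgebra.lTensor_counit_comul, TensorProduct.map_tmul]
      simp [LinearMap.toSpanSingleton_apply]
    have h_c : TensorProduct.map (LinearMap.toSpanSingleton k C one ∘ₗ
        (Coalgebra.counit : C →ₗ[k] k)) (LinearMap.toSpanSingleton k C one ∘ₗ
        (Coalgebra.counit : C →ₗ[k] k)) (Coalgebra.comul x)
        = (Coalgebra.counit : C →ₗ[k] k) x • (one ⊗ₜ[k] one) := by
      have e : TensorProduct.map (LinearMap.toSpanSingleton k C one ∘ₗ
          (Coalgebra.counit : C →ₗ[k] k)) (LinearMap.toSpanSingleton k C one ∘ₗ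
          (Coalgebra.counit : C →ₗ[k] k))
          = TensorProduct.map (LinearMap.toSpanSingleton k C one ∘ₗ
            (Coalgebra.counit : C →ₗ[k] k)) LinearMap.id ∘ₗ
            TensorProduct.map LinearMap.id (LinearMap.toSpanSingleton k C one ∘ₗ
            (Coalgebra.counit : C →ₗ[k] k)) := by
        rw [← TensorProduct.map_comp, LinearMap.comp_id, LinearMap.id_comp]
      rw [e, LinearMap.comp_apply, h_a, TensorProduct.map_tmul]
      simp only [LinearMap.comp_apply, LinearMap.id_apply, LinearMap.toSpanSingleton_apply]
      rw [TensorProduct.smul_tmul']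
    have hy_eq : y = Coalgebra.comul x - one ⊗ₜ[k] x - x ⊗ₜ[k] one
        + (Coalgebra.counit : C →ₗ[k] k) x • (one ⊗ₜ[k] one) := by
      rw [hy, hP]
      show TensorProduct.map (LinearMap.id - LinearMap.toSpanSingleton k C one ∘ₗ
        (Coalgebra.counit : C →ₗ[k] k)) (LinearMap.id - LinearMap.toSpanSingleton k C one ∘ₗ
        (Coalgebra.counit : C →ₗ[k] k)) (Coalgebra.comul x) = _
      rw [TP.map_sub_left, TP.map_sub_right, TP.map_sub_right, LinearMap.sub_apply,
        LinearMap.sub_apply, LinearMap.sub_apply, h_a, h_b, h_c]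
      have hid : TensorProduct.map (LinearMap.id : C →ₗ[k] C) (LinearMap.id : C →ₗ[k] C)
          (Coalgebra.comul x) = Coalgebra.comul x := by simp
      rw [hid]
      abel
    have hcomul_eq : Coalgebra.comul x = y + one ⊗ₜ[k] x + x ⊗ₜ[k] one
        - (Coalgebra.counit : C →ₗ[k] k) x • (one ⊗ₜ[k] one) := by
      rw [hy_eq]; abel
    -- memberships of the three easy terms
    have mem1 : one ⊗ₜ[k] x ∈ S := by
      refine hSle 0 (by omega) ?_
      simpa using tmul_mem_tsub hone0 hx
    have mem2 : x ⊗ₜ[k] one ∈ S := by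
      refine hSle n le_rfl ?_
      have : (n - n : ℕ) = 0 := by omega
      rw [this]
      exact tmul_mem_tsub hx hone0
    have mem3 : (Coalgebra.counit : C →ₗ[k] k) x • (one ⊗ₜ[k] one) ∈ S := by
      refine hSle 0 (by omega) ?_
      refine Submodule.smul_mem _ _ ?_
      rw [Nat.sub_zero]
      exact tmul_mem_tsub hone0
        (ker_delta_mono hcomul hcounit (le_refl 1) (by omega : 1 ≤ n + 1) hone0)
    -- membership of y via the chain lemma
    have hx2 : deltaN k (Coalgebra.comul : C →ₗ[k] C ⊗[k] C) Coalgebra.counit one (n+2) x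
        = 0 := ker_delta_mono hcomul hcounit (by omega : 1 ≤ n+1) (by omega : n+1 ≤ n+2) hx
    have hmapy : ∀ a b : ℕ, 1 ≤ a → 1 ≤ b →
        TensorProduct.map
          (deltaN k (Coalgebra.comul : C →ₗ[k] C ⊗[k] C) Coalgebra.counit one a)
          (deltaN k (Coalgebra.comul : C →ₗ[k] C ⊗[k] C) Coalgebra.counit one b) y
        = TensorProduct.map
          (deltaN k (Coalgebra.comul : C →ₗ[k] C ⊗[k] C) Coalgebra.counit one a)
          (deltaN k (Coalgebra.comul : C →ₗ[k] C ⊗[k] C) Coalgebra.counit one b)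
          (Coalgebra.comul x) := by
      intro a b ha hb
      rw [hy, ← LinearMap.comp_apply, ← TensorProduct.map_comp, hpπ a ha, hpπ b hb]
    have mem_y : y ∈ S := by
      set F : ℕ → Submodule k C := fun s =>
        LinearMap.ker (deltaN k (Coalgebra.comul : C →ₗ[k] C ⊗[k] C) Coalgebra.counit one s)
        with hF
      set G : ℕ → Submodule k C := fun j => if j = 0 then ⊥ else
        LinearMap.ker (deltaN k (Coalgebra.comul : C →ₗ[k] C ⊗[k] C) Coalgebra.counit one j)
        with hG
      have hGmono : Monotone G := by
        intro i j hij
        rcases Nat.eq_zero_or_pos i with h0 | h0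
        · subst h0; simp [hG]
        · have hj : j ≠ 0 := by omega
          have hi : i ≠ 0 := by omega
          simp only [hG, if_neg hi, if_neg hj]
          exact ker_delta_mono hcomul hcounit (by omega) hij
      have hG0 : G 0 = ⊥ := by simp [hG]
      -- the top condition
      have htop : y ∈ tsub k C ⊤ (G (n+1)) := by
        have hker : TensorProduct.map (LinearMap.id : C →ₗ[k] C)
            (deltaN k (Coalgebra.comul : C →ₗ[k] C ⊗[k] C) Coalgebra.counit one (n+1)) y
            = 0 := by
          have e : TensorProduct.map (LinearMap.id : C →ₗ[k] C)
              (deltaN k (Coalgebra.comul : C →ₗ[k] C ⊗[k] C) Coalgebra.counit one (n+1)) y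
              = TensorProduct.map P
                (deltaN k (Coalgebra.comul : C →ₗ[k] C ⊗[k] C) Coalgebra.counit one (n+1))
                (Coalgebra.comul x) := by
            rw [hy, ← LinearMap.comp_apply, ← TensorProduct.map_comp, LinearMap.id_comp,
              hpπ (n+1) (by omega)]
          rw [e]
          have hz := LinearMap.congr_fun (deltaN_succ (k := k)
            (Coalgebra.comul : C →ₗ[k] C ⊗[k] C) Coalgebra.counit one (n+1)) x
          simp only [LinearMap.comp_apply] at hz
          rw [hx2] at hz
          have hz' : consTP k C (n+1) (TensorProduct.map P
              (deltaN k (Coalgebra.comul : C →ₗ[k] C ⊗[k] C) Coalgebra.counit one (n+1))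
              (Coalgebra.comul x)) = 0 := hz.symm
          rw [← consE_coe] at hz'
          exact (LinearEquiv.map_eq_zero_iff (consE k C (n+1))).1 hz'
        have := ker_map_le _ _ hker
        rw [LinearMap.ker_id, tsub_bot_left, bot_sup_eq] at this
        have hGn : G (n+1) = LinearMap.ker
            (deltaN k (Coalgebra.comul : C →ₗ[k] C ⊗[k] C) Coalgebra.counit one (n+1)) := by
          simp [hG]
        rw [hGn]
        exact this
      -- the side conditions
      have hcond : ∀ s, 1 ≤ s → s ≤ n+1 →
          y ∈ tsub k C (F s) ⊤ ⊔ tsub k C ⊤ (G (n+1-s)) := by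
        intro s hs1 hs2
        rcases Nat.lt_or_ge s (n+1) with hlt | hge
        · -- s ≤ n : use fact_I with b = n+1-s ≥ 1
          have hb1 : 1 ≤ n+1-s := by omega
          obtain ⟨T, hT⟩ := fact_I hcomul hcounit s hs1 (n+1-s) hb1 (n+1) (by omega)
          have h0 : TensorProduct.map
              (deltaN k (Coalgebra.comul : C →ₗ[k] C ⊗[k] C) Coalgebra.counit one s)
              (deltaN k (Coalgebra.comul : C →ₗ[k] C ⊗[k] C) Coalgebra.counit one (n+1-s)) y
              = 0 := by
            rw [hmapy s (n+1-s) hs1 hb1, ← LinearMap.comp_apply, hT, LinearMap.comp_apply,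
              LinearMap.mem_ker.1 hx, map_zero]
          have := ker_map_le _ _ h0
          have hGns : G (n+1-s) = LinearMap.ker
              (deltaN k (Coalgebra.comul : C →ₗ[k] C ⊗[k] C) Coalgebra.counit one (n+1-s)) := by
            simp only [hG, if_neg (by omega : n+1-s ≠ 0)]
          rw [hGns]
          exact this
        · -- s = n+1 : G 0 = ⊥, need the pure left membership
          have hseq : s = n+1 := by omega
          subst hseq
          obtain ⟨T, hT⟩ := fact_I hcomul hcounit (n+1) (by omega) 1 (le_refl 1) (n+2) (by omega)
          have h0 : TensorProduct.map
              (deltaN k (Coalgebra.comul : C →ₗ[k] C ⊗[k] C) Coalgebra.counit one (n+1))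
              (deltaN k (Coalgebra.comul : C →ₗ[k] C ⊗[k] C) Coalgebra.counit one 1) y
              = 0 := by
            rw [hmapy (n+1) 1 (by omega) le_rfl, ← LinearMap.comp_apply, hT,
              LinearMap.comp_apply, hx2, map_zero]
          have hsup := ker_map_le _ _ h0
          obtain ⟨u, hu, v, hv, huv⟩ := Submodule.mem_sup.1 hsup
          have hyπ : TensorProduct.map LinearMap.id P y = y := by
            rw [hy, ← LinearMap.comp_apply, ← TensorProduct.map_comp, LinearMap.id_comp,
              pi_idem hcounit]
          have hv0 : TensorProduct.map LinearMap.id P v = 0 := by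
            obtain ⟨w, rfl⟩ := hv
            rw [← LinearMap.comp_apply, ← TensorProduct.map_comp]
            have hπk : P ∘ₗ (LinearMap.ker (deltaN k (Coalgebra.comul : C →ₗ[k] C ⊗[k] C)
                Coalgebra.counit one 1)).subtype = 0 := by
              ext z
              exact (dN_one_eq_zero_iff (z : C)).1 (LinearMap.mem_ker.1 z.2)
            rw [hπk, TensorProduct.map_zero_right]
            simp
          have hyu : y = TensorProduct.map LinearMap.id P u := by
            rw [← hyπ, ← huv, map_add, hv0, add_zero]
          have : y ∈ tsub k C (F (n+1)) ⊤ := by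
            rw [hyu]
            exact map_tsub_mem (fun z hz => hz) (fun z _ => Submodule.mem_top) hu
          exact Submodule.mem_sup_left this
      have hchain := chain_lemma F G hGmono hG0 htop hcond
      have hle : (⨆ s ∈ Finset.Icc 1 (n+1), tsub k C (F s) (G (n+1+1-s))) ≤ S := by
        refine iSup₂_le fun s hs => ?_
        rw [Finset.mem_Icc] at hs
        obtain ⟨t, rfl⟩ : ∃ t, s = t + 1 := ⟨s - 1, by omega⟩
        have ht : t ≤ n := by omega
        have hidx : n + 1 + 1 - (t+1) = (n - t) + 1 := by omega
        have hGidx : G (n + 1 + 1 - (t+1)) = LinearMap.ker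
            (deltaN k (Coalgebra.comul : C →ₗ[k] C ⊗[k] C) Coalgebra.counit one ((n-t)+1)) := by
          rw [hidx]
          simp only [hG, if_neg (by omega : (n-t)+1 ≠ 0)]
        rw [hGidx]
        exact hSle t ht
      exact hle hchain
    rw [hcomul_eq]
    exact Submodule.sub_mem _ (Submodule.add_mem _ (Submodule.add_mem _ mem_y mem1) mem2) mem3
  refine ⟨part1, ?_, ?_⟩
  · exact Submodule.mem_iSup_of_mem 0 hone0
  · rw [Submodule.map_iSup]
    refine iSup_le fun n => le_trans (part1 n) ?_
    refine iSup₂_le fun r hr => tsub_mono ?_ ?_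
    · exact le_iSup (fun i => Dfil k Coalgebra.comul Coalgebra.counit one i) r
    · exact le_iSup (fun i => Dfil k Coalgebra.comul Coalgebra.counit one i) (n - r)

/-- **Lemma 2.8(b),(d).** In a coaugmented `k`-coalgebra `C`, the
`δ`-filtration is a coalgebra filtration: `Δ(D_n) ⊆ Σ_{r+s=n} D_r ⊗ D_s` for
all `n ∈ ℕ`.  Consequently `C′ := ⋃_{n ∈ ℕ} D_n` is a subcoalgebra of `C`
containing the coaugmentation element `1̲`. -/
theorem delta_filtration_is_coalgebra_filtration
    (k : Type) [Field k] (C : Type) [AddCommGroup C] [Module k C] [Coalgebra k C]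
    (one : C) (hcomul : Coalgebra.comul one = one ⊗ₜ[k] one)
    (hcounit : Coalgebra.counit one = (1 : k)) :
    (∀ n : ℕ,
      Submodule.map (Coalgebra.comul : C →ₗ[k] C ⊗[k] C)
          (Dfil k Coalgebra.comul Coalgebra.counit one n) ≤
        ⨆ r ∈ Finset.range (n+1),
          tsub k C (Dfil k Coalgebra.comul Coalgebra.counit one r)
            (Dfil k Coalgebra.comul Coalgebra.counit one (n - r))) ∧
    one ∈ (⨆ n : ℕ, Dfil k Coalgebra.comul Coalgebra.counit one n) ∧
    Submodule.map (Coalgebra.comul : C →ₗ[k] C ⊗[k] C)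
        (⨆ n : ℕ, Dfil k Coalgebra.comul Coalgebra.counit one n) ≤
      tsub k C (⨆ n : ℕ, Dfil k Coalgebra.comul Coalgebra.counit one n)
        (⨆ n : ℕ, Dfil k Coalgebra.comul Coalgebra.counit one n) := by
  exact delta_filtration_is_coalgebra_filtration' k C one hcomul hcounit
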